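/- The correlator C = (1/2)·[[1, 1],[1, −2]] has a unique PSD completion in E₄, namely Ĉ = [[1, −1/2, 1/2, 1/2],[−1/2, 1, 1/2, −1],[1/2, 1/2, 1, −1/2],[1/2, −1, −1/2, 1]]; moreover C is an extreme point of Cor(2,2). -/

import Mathlib

open Matrix Real
open scoped RealInnerProductSpace

/-- The set of quantum correlation matrices (Tsirelson): `n × m` real matrices whose entries
are inner products of unit vectors in `ℝ^{n+m}`. -/
def Cor (n m : ℕ) : Set (Matrix (Fin n) (Fin m) ℝ) :=
  {C | ∃ u : Fin n → EuclideanSpace ℝ (Fin (n + m)),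
       ∃ v : Fin m → EuclideanSpace ℝ (Fin (n + m)),
       (∀ x, ‖u x‖ = 1) ∧ (∀ y, ‖v y‖ = 1) ∧
       ∀ x y, C x y = ⟪u x, v y⟫}

/-- The elliptope: PSD matrices with unit diagonal. -/
def Elliptope (k : ℕ) : Set (Matrix (Fin k) (Fin k) ℝ) :=
  {X | X.PosSemidef ∧ ∀ i, X i i = 1}

/-- `X` is a PSD completion of `C`. -/
def IsPSDCompletion (n m : ℕ) (X : Matrix (Fin (n + m)) (Fin (n + m)) ℝ)
    (C : Matrix (Fin n) (Fin m) ℝ) : Prop :=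
  X ∈ Elliptope (n + m) ∧ ∀ x y, X (Fin.castAdd m x) (Fin.natAdd n y) = C x y

/-- `C` is an extreme point of the convex set `S`. -/
def IsExtremePt {E : Type*} [AddCommMonoid E] [Module ℝ E] (S : Set E) (C : E) : Prop :=
  C ∈ S ∧ ∀ C₁ ∈ S, ∀ C₂ ∈ S, ∀ l : ℝ, 0 < l → l < 1 →
    C = l • C₁ + (1 - l) • C₂ → C₁ = C ∧ C₂ = C

/-- `X ∈ E₄` is a PSD completion of the `2 × 2` matrix `C`. -/
def IsPSDCompletion22 (X : Matrix (Fin 4) (Fin 4) ℝ)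
    (C : Matrix (Fin 2) (Fin 2) ℝ) : Prop :=
  X.PosSemidef ∧ (∀ i, X i i = 1) ∧
  X 0 2 = C 0 0 ∧ X 0 3 = C 0 1 ∧ X 1 2 = C 1 0 ∧ X 1 3 = C 1 1

/-- The correlator of Example 3. -/
noncomputable def Cex : Matrix (Fin 2) (Fin 2) ℝ :=
  (1 / 2 : ℝ) • !![1, 1; 1, -2]

/-- Its unique PSD completion. -/
noncomputable def Cexhat : Matrix (Fin 4) (Fin 4) ℝ :=
  !![1, -1/2, 1/2, 1/2;
     -1/2, 1, 1/2, -1;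
     1/2, 1/2, 1, -1/2;
     1/2, -1, -1/2, 1]


noncomputable def Aex : Matrix (Fin 2) (Fin 4) ℝ :=
  !![-1/2, 1, 1/2, -1; Real.sqrt 3/2, 0, Real.sqrt 3/2, 0]

lemma Cexhat_eq : Cexhat = Aexᴴ * Aex := by
  have h3 : Real.sqrt 3 * Real.sqrt 3 = 3 := Real.mul_self_sqrt (by norm_num)
  ext i j
  fin_cases i <;> fin_cases j <;>
    simp [Cexhat, Aex, mul_apply, Fin.sum_univ_two, conjTranspose_apply,
      Matrix.vecHead, Matrix.vecTail] <;> nlinarith [h3]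

lemma Cexhat_psd : Cexhat.PosSemidef := Cexhat_eq ▸ posSemidef_conjTranspose_mul_self Aex

lemma uniq (X : Matrix (Fin 4) (Fin 4) ℝ) (hpsd : X.PosSemidef) (hd : ∀ i, X i i = 1)
    (h02 : X 0 2 = 1/2) (h03 : X 0 3 = 1/2) (h12 : X 1 2 = 1/2) (h13 : X 1 3 = -1) :
    X = Cexhat := by
  have hs : ∀ i j : Fin 4, X i j = X j i := fun i j => by
    conv_lhs => rw [← hpsd.1]
    simp [conjTranspose_apply]
  have h01 : X 0 1 = -1/2 := by
    have hq := hpsd.dotProduct_mulVec_nonneg ![-(X 0 1 + 1/2), 1, 0, 1]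
    simp [dotProduct, mulVec, Fin.sum_univ_four, hd, hs 1 0, hs 3 0, hs 3 1, h03, h13] at hq
    nlinarith [hq, hd 0, hd 1, hd 3, h03, h13]
  have h23 : X 2 3 = -1/2 := by
    have hq := hpsd.dotProduct_mulVec_nonneg ![0, 1, -(X 2 3 + 1/2), 1]
    simp [dotProduct, mulVec, Fin.sum_univ_four, hd, hs 2 1, hs 3 1, hs 3 2, h12, h13] at hq
    nlinarith [hq]
  ext i j
  fin_cases i <;> fin_cases j <;>
    simp [Cexhat, Matrix.vecHead, Matrix.vecTail, hd, h01, h02, h03, h12, h13, h23,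
      hs 1 0, hs 2 0, hs 3 0, hs 2 1, hs 3 1, hs 3 2]

lemma cex_mem : Cex ∈ Cor 2 2 := by
  have h3 : Real.sqrt 3 * Real.sqrt 3 = 3 := Real.mul_self_sqrt (by norm_num)
  refine ⟨![!₂[-1/2, Real.sqrt 3/2, 0, 0], !₂[1, 0, 0, 0]],
          ![!₂[1/2, Real.sqrt 3/2, 0, 0], !₂[-1, 0, 0, 0]], ?_, ?_, ?_⟩
  · intro x
    rw [EuclideanSpace.norm_eq]
    fin_cases x <;>
    · rw [show (1:ℝ) = Real.sqrt 1 by simp]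
      congr 1
      simp [Fin.sum_univ_four, Matrix.vecHead, Matrix.vecTail] <;> nlinarith [h3]
  · intro y
    rw [EuclideanSpace.norm_eq]
    fin_cases y <;>
    · rw [show (1:ℝ) = Real.sqrt 1 by simp]
      congr 1
      simp [Fin.sum_univ_four, Matrix.vecHead, Matrix.vecTail] <;> nlinarith [h3]
  · intro x y
    fin_cases x <;> fin_cases y <;>
    · simp [Cex, PiLp.inner_apply, Fin.sum_univ_four, Matrix.vecHead, Matrix.vecTail] <;>
        nlinarith [h3]

section helpers
variable {E : Type*} [NormedAddCommGroup E] [InnerProductSpace ℝ E]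

lemma sq2 (u v : E) (hu : ‖u‖ = 1) (hv : ‖v‖ = 1) :
    -1 ≤ ⟪u, v⟫ ∧ (⟪u, v⟫ = -1 → v = -u) := by
  have h : ‖u + v‖ ^ 2 = 2 + 2 * ⟪u, v⟫ := by
    rw [norm_add_sq_real, hu, hv]; ring
  constructor
  · nlinarith [sq_nonneg ‖u + v‖]
  · intro hi
    have : ‖u + v‖ ^ 2 = 0 := by rw [h, hi]; ring
    have : u + v = 0 := by
      rwa [pow_eq_zero_iff (by norm_num), norm_eq_zero] at this
    linear_combination (norm := abel) this
  
lemma sq3expand (u0 u1 v0 : E) (h0 : ‖u0‖ = 1) (h1 : ‖u1‖ = 1) (h2 : ‖v0‖ = 1) :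
    ⟪u0 + u1 - v0, u0 + u1 - v0⟫ = 3 + 2*⟪u0,u1⟫ - 2*⟪u0,v0⟫ - 2*⟪u1,v0⟫ := by
  have e0 : ⟪u0,u0⟫ = 1 := by rw [real_inner_self_eq_norm_mul_norm, h0]; norm_num
  have e1 : ⟪u1,u1⟫ = 1 := by rw [real_inner_self_eq_norm_mul_norm, h1]; norm_num
  have e2 : ⟪v0,v0⟫ = 1 := by rw [real_inner_self_eq_norm_mul_norm, h2]; norm_num
  simp only [inner_add_left, inner_add_right, inner_sub_left, inner_sub_right, e0, e1, e2,
    real_inner_comm u0 u1, real_inner_comm u0 v0, real_inner_comm u1 v0]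
  ring

end helpers

lemma cor_half (C C' : Matrix (Fin 2) (Fin 2) ℝ) (hC : C ∈ Cor 2 2) (hC' : C' ∈ Cor 2 2)
    (l : ℝ) (hl0 : 0 < l) (hl1 : l < 1) (h : Cex = l • C + (1 - l) • C') : C = Cex := by
  obtain ⟨u, v, hu, hv, hin⟩ := hC
  obtain ⟨u', v', hu', hv', hin'⟩ := hC'
  have he : ∀ x y, Cex x y = l * C x y + (1 - l) * C' x y := by
    intro x y; rw [h]; simp
  -- step 1 : C 1 1 = C' 1 1 = -1, v 1 = -u 1
  obtain ⟨hb, hb2⟩ := sq2 (u 1) (v 1) (hu 1) (hv 1)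
  obtain ⟨hb', hb2'⟩ := sq2 (u' 1) (v' 1) (hu' 1) (hv' 1)
  have h11 := he 1 1
  rw [hin 1 1, hin' 1 1] at h11
  have c11 : ⟪u 1, v 1⟫ = -1 := by
    have : Cex 1 1 = -1 := by norm_num [Cex]
    rw [this] at h11; nlinarith
  have c11' : ⟪u' 1, v' 1⟫ = -1 := by
    have : Cex 1 1 = -1 := by norm_num [Cex]
    rw [this] at h11; nlinarith
  have hv1 : v 1 = -u 1 := hb2 c11
  have hv1' : v' 1 = -u' 1 := hb2' c11'
  -- C 0 1 = -⟪u 0, u 1⟫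
  have c01 : C 0 1 = -⟪u 0, u 1⟫ := by rw [hin 0 1, hv1, inner_neg_right]
  have c01' : C' 0 1 = -⟪u' 0, u' 1⟫ := by rw [hin' 0 1, hv1', inner_neg_right]
  -- step 2 : v 0 = u 0 + u 1
  have ht : ⟪u 0 + u 1 - v 0, u 0 + u 1 - v 0⟫ = 3 - 2*C 0 1 - 2*C 0 0 - 2*C 1 0 := by
    rw [sq3expand _ _ _ (hu 0) (hu 1) (hv 0), c01, ← hin 0 0, ← hin 1 0]; ring
  have ht' : ⟪u' 0 + u' 1 - v' 0, u' 0 + u' 1 - v' 0⟫ = 3 - 2*C' 0 1 - 2*C' 0 0 - 2*C' 1 0 := by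
    rw [sq3expand _ _ _ (hu' 0) (hu' 1) (hv' 0), c01', ← hin' 0 0, ← hin' 1 0]; ring
  have htn := real_inner_self_nonneg (x := u 0 + u 1 - v 0)
  have htn' := real_inner_self_nonneg (x := u' 0 + u' 1 - v' 0)
  have h00 := he 0 0; have h01 := he 0 1; have h10 := he 1 0
  have e00 : Cex 0 0 = 1/2 := by norm_num [Cex]
  have e01 : Cex 0 1 = 1/2 := by norm_num [Cex]
  have e10 : Cex 1 0 = 1/2 := by norm_num [Cex]
  rw [e00] at h00; rw [e01] at h01; rw [e10] at h10
  have hteq : ⟪u 0 + u 1 - v 0, u 0 + u 1 - v 0⟫ = 0 := by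
    nlinarith [ht, ht', htn, htn']
  have hv0 : v 0 = u 0 + u 1 := by
    have : u 0 + u 1 - v 0 = 0 := inner_self_eq_zero.mp hteq
    linear_combination (norm := abel) -this
  -- step 3 : p = -1/2
  have e1 : ⟪u 0, u 0⟫ = 1 := by
    rw [real_inner_self_eq_norm_mul_norm, hu 0]; norm_num
  have e2 : ⟪u 1, u 1⟫ = 1 := by
    rw [real_inner_self_eq_norm_mul_norm, hu 1]; norm_num
  have e3 : ⟪v 0, v 0⟫ = 1 := by
    rw [real_inner_self_eq_norm_mul_norm, hv 0]; norm_num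
  have hp : ⟪u 0, u 1⟫ = -1/2 := by
    have h4 : ⟪u 0 + u 1, u 0 + u 1⟫ = (1:ℝ) := by rw [← hv0]; exact e3
    rw [inner_add_left, inner_add_right, inner_add_right, e1, e2,
      real_inner_comm (u 0) (u 1)] at h4
    linarith
  have hp' : ⟪u 1, u 0⟫ = -1/2 := by rw [real_inner_comm]; exact hp
  -- conclude
  ext x y
  fin_cases x <;> fin_cases y
  · show C 0 0 = Cex 0 0
    rw [hin 0 0, hv0, inner_add_right, e1, hp, e00]; norm_num
  · show C 0 1 = Cex 0 1
    rw [show C 0 1 = -⟪u 0, u 1⟫ from c01, hp, e01]; norm_num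
  · show C 1 0 = Cex 1 0
    rw [hin 1 0, hv0, inner_add_right, e2, hp', e10]; norm_num
  · show C 1 1 = Cex 1 1
    rw [hin 1 1, c11]; norm_num [Cex]

theorem stmt18 :
    IsPSDCompletion22 Cexhat Cex ∧
    (∀ X, IsPSDCompletion22 X Cex → X = Cexhat) ∧
    IsExtremePt (Cor 2 2) Cex := by
  have cv : ∀ x y : Fin 2, Cex x y = !![(1:ℝ)/2, 1/2; 1/2, -1] x y := by
    intro x y; fin_cases x <;> fin_cases y <;> norm_num [Cex]
  refine ⟨⟨Cexhat_psd, ?_, ?_, ?_, ?_, ?_⟩, ?_, cex_mem, ?_⟩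
  · intro i; fin_cases i <;> norm_num [Cexhat]
  · rw [cv 0 0]; norm_num [Cexhat]; rfl
  · rw [cv 0 1]; norm_num [Cexhat]; rfl
  · rw [cv 1 0]; norm_num [Cexhat]; rfl
  · rw [cv 1 1]; norm_num [Cexhat]; rfl
  · rintro X ⟨hpsd, hd, e1, e2, e3, e4⟩
    rw [cv 0 0] at e1; rw [cv 0 1] at e2; rw [cv 1 0] at e3; rw [cv 1 1] at e4
    exact uniq X hpsd hd (by simpa using e1) (by simpa using e2) (by simpa using e3)
      (by simpa using e4)
  · intro C₁ hC₁ C₂ hC₂ l hl0 hl1 h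
    refine ⟨cor_half C₁ C₂ hC₁ hC₂ l hl0 hl1 h, cor_half C₂ C₁ hC₂ hC₁ (1-l)
      (by linarith) (by linarith) ?_⟩
    rw [h]; module
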